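/- Let n ≥ 2 and suppose n orthonormal bases of ℂ^d form an n-fold unbiased set (nUB). Then any two of these bases are mutually unbiased: for any y ≠ z in {1,…,n} and all i, j ∈ [d], |⟨y_i|z_j⟩| = 1/√d. -/

import Mathlib

open scoped InnerProductSpace

open scoped Classical in
/-- The set of full cycles (`card ι`-cycles) in the permutation group of `ι`. -/
noncomputable def nCycles (ι : Type) [Fintype ι] [DecidableEq ι] : Finset (Equiv.Perm ι) :=
  Finset.univ.filter fun σ => σ.IsCycle ∧ σ.support = Finset.univ

/-- A family of `n` orthonormal bases of `ℂ^d` is `n`-fold unbiased (an `n`UB) if for every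
index tuple `x`, the sum over all `n`-cycles `σ` of the cyclic products of overlaps equals
`(n-1)!/d^(n-1)`. -/
def IsNUB {ι : Type} [Fintype ι] [DecidableEq ι] {d : ℕ}
    (B : ι → OrthonormalBasis (Fin d) ℂ (EuclideanSpace ℂ (Fin d))) : Prop :=
  ∀ x : ι → Fin d,
    (∑ σ ∈ nCycles ι, ∏ y, ⟪B y (x y), B (σ y) (x (σ y))⟫_ℂ)
      = ((Fintype.card ι - 1).factorial : ℂ) / (d : ℂ) ^ (Fintype.card ι - 1)


open Equiv Equiv.Perm in
private lemma card_nCycles {n : ℕ} (hn : 2 ≤ n) :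
    (nCycles (Fin n)).card = (n - 1).factorial := by
  classical
  set G := Equiv.Perm (Fin n) with hG
  set c : G := finRotate n with hc
  have hcyc : c.IsCycle := isCycle_finRotate_of_le hn
  have hsupp : c.support = Finset.univ := support_finRotate_of_le hn
  have hcard : ∀ σ : G, (σ.IsCycle ∧ σ.support = Finset.univ) ↔ σ.cycleType = {n} := by
    intro σ
    constructor
    · rintro ⟨h1, h2⟩
      rw [h1.cycleType, h2]
      simp
    · intro h
      have h1 : σ.IsCycle := by
        rw [← card_cycleType_eq_one, h]; simp
      refine ⟨h1, Finset.eq_univ_of_card _ ?_⟩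
      have := sum_cycleType σ
      rw [h] at this
      simp only [Multiset.sum_singleton] at this
      rw [← this, Fintype.card_fin]
  have hctype : c.cycleType = {n} := (hcard c).mp ⟨hcyc, hsupp⟩
  have horb : (MulAction.orbit (ConjAct G) c) = (↑(nCycles (Fin n)) : Set G) := by
    ext σ
    rw [ConjAct.mem_orbit_conjAct]
    simp only [nCycles, Finset.coe_filter, Set.mem_setOf_eq, Finset.mem_univ, true_and]
    rw [hcard, isConj_iff_cycleType_eq, hctype]
  have hstab : Nat.card (MulAction.stabilizer (ConjAct G) c) = n := by
    have hmem : ∀ p : ConjAct G, p ∈ MulAction.stabilizer (ConjAct G) c ↔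
        ConjAct.ofConjAct p ∈ Subgroup.zpowers c := by
      intro p
      rw [MulAction.mem_stabilizer_iff, ConjAct.smul_def]
      have hco : (ConjAct.ofConjAct p * c * (ConjAct.ofConjAct p)⁻¹ = c) ↔
          Commute (ConjAct.ofConjAct p) c := by
        rw [Commute, SemiconjBy, mul_inv_eq_iff_eq_mul]
      rw [hco]
      constructor
      · intro hcomm
        obtain ⟨hc', hmem'⟩ := hcyc.commute_iff.mp hcomm
        rwa [ofSubtype_subtypePerm _ (fun x hx => by rw [hsupp]; exact Finset.mem_univ x)]
          at hmem'
      · rintro ⟨k, hk⟩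
        rw [← hk]
        exact (Commute.refl c).zpow_left k
    have : Nat.card (MulAction.stabilizer (ConjAct G) c)
        = Nat.card (Subgroup.zpowers c) := by
      refine Nat.card_congr (Equiv.subtypeEquiv (ConjAct.ofConjAct (G := G)).toEquiv ?_)
      intro p
      exact hmem p
    rw [this, Nat.card_zpowers, hcyc.orderOf, hsupp]
    simp
  have horbstab := Nat.card_congr (MulAction.orbitProdStabilizerEquivGroup (ConjAct G) c)
  rw [Nat.card_prod, hstab] at horbstab
  have horbcard : Nat.card (MulAction.orbit (ConjAct G) c) = (nCycles (Fin n)).card := by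
    rw [Nat.card_coe_set_eq, horb, Set.ncard_coe_finset]
  rw [horbcard] at horbstab
  have hcardG : Nat.card (ConjAct G) = n.factorial := by
    rw [Nat.card_eq_fintype_card]
    show Fintype.card (Equiv.Perm (Fin n)) = n.factorial
    rw [Fintype.card_perm, Fintype.card_fin]
  rw [hcardG] at horbstab
  have hnpos : 0 < n := by omega
  have hf := Nat.mul_factorial_pred hnpos.ne'
  exact Nat.eq_of_mul_eq_mul_right hnpos (by rw [horbstab, ← hf, Nat.mul_comm])


theorem Equiv.Perm.apply_inv_self {α : Type*} (f : Equiv.Perm α) (x : α) : f (f⁻¹ x) = x :=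
  f.apply_symm_apply x

theorem Equiv.Perm.inv_apply_self {α : Type*} (f : Equiv.Perm α) (x : α) : f⁻¹ (f x) = x :=
  f.symm_apply_apply x

set_option maxHeartbeats 1000000 in
private lemma sum_update {α : Type*} [Fintype α] [DecidableEq α] {β : Type*} [Fintype β]
    {M : Type*} [AddCommMonoid M] (a : α) (G : (α → β) → M) :
    ∑ x : α → β, ∑ k : β, G (Function.update x a k) = (Fintype.card β) • ∑ x : α → β, G x := by
  have hinv : Function.Involutive
      (fun p : (α → β) × β => (Function.update p.1 a p.2, p.1 a)) := by
    rintro ⟨x, k⟩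
    simp [Function.update_idem, Function.update_eq_self]
  calc ∑ x : α → β, ∑ k : β, G (Function.update x a k)
      = ∑ p : (α → β) × β, G (Function.update p.1 a p.2) :=
        (Fintype.sum_prod_type (fun p : (α → β) × β => G (Function.update p.1 a p.2))).symm
    _ = ∑ p : (α → β) × β, G p.1 :=
        Fintype.sum_bijective _ hinv.bijective _ _ (fun p => rfl)
    _ = ∑ x : α → β, ∑ _k : β, G x :=
        Fintype.sum_prod_type (fun p : (α → β) × β => G p.1)
    _ = (Fintype.card β) • ∑ x : α → β, G x := by
        simp [Finset.sum_const, Finset.smul_sum]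

section analytic
variable {n d : ℕ}

private def Xf (y z : Fin n) (i j : Fin d) (x : Fin n → Fin d) : Fin n → Fin d :=
  Function.update (Function.update x y i) z j

private lemma Xf_y {y z : Fin n} (hyz : y ≠ z) (i j : Fin d) (x : Fin n → Fin d) :
    Xf y z i j x y = i := by
  simp [Xf, Function.update_apply, hyz]

private lemma Xf_z (y z : Fin n) (i j : Fin d) (x : Fin n → Fin d) :
    Xf y z i j x z = j := by
  simp [Xf]

private lemma Xf_other {y z w : Fin n} (hwy : w ≠ y) (hwz : w ≠ z) (i j : Fin d)
    (x : Fin n → Fin d) : Xf y z i j x w = x w := by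
  simp [Xf, Function.update_apply, hwy, hwz]

open Equiv Equiv.Perm Finset in
private lemma key (B : Fin n → OrthonormalBasis (Fin d) ℂ (EuclideanSpace ℂ (Fin d)))
    {y z : Fin n} (hyz : y ≠ z) (i j : Fin d) :
    ∀ m (σ : Equiv.Perm (Fin n)), σ.support.card = m → σ.IsCycle →
      y ∈ σ.support → z ∈ σ.support →
      ∑ x : Fin n → Fin d, ∏ w ∈ σ.support,
          ⟪B w (Xf y z i j x w), B (σ w) (Xf y z i j x (σ w))⟫_ℂ
        = (d : ℂ) ^ (n - m + 2) * (⟪B y i, B z j⟫_ℂ * ⟪B z j, B y i⟫_ℂ) := by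
  intro m
  induction m using Nat.strong_induction_on with
  | _ m IH =>
  intro σ hm hσ hy hz
  by_cases hex : ∃ a ∈ σ.support, a ≠ y ∧ a ≠ z
  · obtain ⟨a, has, hay, haz⟩ := hex
    have hσa : σ a ≠ a := mem_support.1 has
    have hffa : σ (σ a) ≠ a := by
      intro hff
      have hya : y = σ a := by
        obtain ⟨k, hk⟩ := hσ.sameCycle hσa (mem_support.1 hy)
        rcases zpow_apply_eq_of_apply_apply_eq_self hff k with h1 | h1
        · rw [hk] at h1; exact absurd h1.symm hay
        · rw [hk] at h1; exact h1
      have hza : z = σ a := by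
        obtain ⟨k, hk⟩ := hσ.sameCycle hσa (mem_support.1 hz)
        rcases zpow_apply_eq_of_apply_apply_eq_self hff k with h1 | h1
        · rw [hk] at h1; exact absurd h1.symm haz
        · rw [hk] at h1; exact h1
      exact hyz (hya.trans hza.symm)
    have hainv : σ⁻¹ a ≠ a := by
      intro h
      have h2 := congrArg σ h
      rw [apply_inv_self] at h2
      exact hσa h2.symm
    have hinvmem : σ⁻¹ a ∈ σ.support := by
      rw [mem_support, apply_inv_self]
      exact fun h => hainv h.symm
    have hσ'c : (Equiv.swap a (σ a) * σ).IsCycle := hσ.swap_mul hσa hffa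
    have hs' : (Equiv.swap a (σ a) * σ).support = σ.support.erase a := by
      rw [support_swap_mul_eq σ a hffa, sdiff_singleton_eq_erase]
    have hy' : y ∈ (Equiv.swap a (σ a) * σ).support := by
      rw [hs']; exact mem_erase.2 ⟨Ne.symm hay, hy⟩
    have hz' : z ∈ (Equiv.swap a (σ a) * σ).support := by
      rw [hs']; exact mem_erase.2 ⟨Ne.symm haz, hz⟩
    have hmn : m ≤ n := by
      rw [← hm]; simpa using card_le_univ σ.support
    have hm2 : 2 ≤ m := hm ▸ hσ.two_le_card_support
    have hcard' : (Equiv.swap a (σ a) * σ).support.card = m - 1 := by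
      rw [hs', card_erase_of_mem has, hm]
    have hIH := IH (m - 1) (by omega) _ hcard' hσ'c hy' hz'
    have hσ'inv : (Equiv.swap a (σ a) * σ) (σ⁻¹ a) = σ a := by
      rw [mul_apply, apply_inv_self, swap_apply_left]
    have hσwa : ∀ w : Fin n, w ≠ σ⁻¹ a → σ w ≠ a := by
      intro w h2 h
      apply h2
      rw [← h, inv_apply_self]
    have hσ'w : ∀ w : Fin n, w ≠ a → w ≠ σ⁻¹ a → (Equiv.swap a (σ a) * σ) w = σ w := by
      intro w h1 h2
      rw [mul_apply]
      exact swap_apply_of_ne_of_ne (hσwa w h2) (fun h => h1 (σ.injective h))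
    have hXupd : ∀ (x : Fin n → Fin d) (k : Fin d) (w : Fin n), w ≠ a →
        Xf y z i j (Function.update x a k) w = Xf y z i j x w := by
      intro x k w hw
      by_cases h1 : w = z
      · subst h1; rw [Xf_z, Xf_z]
      by_cases h2 : w = y
      · subst h2; rw [Xf_y hyz, Xf_y hyz]
      · rw [Xf_other h2 h1, Xf_other h2 h1, Function.update_of_ne hw]
    have hXa : ∀ (x : Fin n → Fin d) (k : Fin d),
        Xf y z i j (Function.update x a k) a = k := by
      intro x k
      rw [Xf_other hay haz, Function.update_self]
    have htmem : σ⁻¹ a ∈ σ.support.erase a := mem_erase.2 ⟨hainv, hinvmem⟩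
    have hsplit : ∀ g : Fin n → ℂ, ∏ w ∈ σ.support, g w
        = g a * (g (σ⁻¹ a) * ∏ w ∈ (σ.support.erase a).erase (σ⁻¹ a), g w) := by
      intro g
      rw [← mul_prod_erase _ _ has, ← mul_prod_erase _ _ htmem]
    have hsplit' : ∀ g : Fin n → ℂ, ∏ w ∈ σ.support.erase a, g w
        = g (σ⁻¹ a) * ∏ w ∈ (σ.support.erase a).erase (σ⁻¹ a), g w :=
      fun g => (mul_prod_erase _ _ htmem).symm
    have hmerge : ∀ x : Fin n → Fin d,
        ∏ w ∈ (Equiv.swap a (σ a) * σ).support,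
          ⟪B w (Xf y z i j x w),
            B ((Equiv.swap a (σ a) * σ) w) (Xf y z i j x ((Equiv.swap a (σ a) * σ) w))⟫_ℂ
        = ∑ k : Fin d, ∏ w ∈ σ.support,
            ⟪B w (Xf y z i j (Function.update x a k) w),
              B (σ w) (Xf y z i j (Function.update x a k) (σ w))⟫_ℂ := by
      intro x
      have hR : ∀ k : Fin d, ∏ w ∈ σ.support,
            ⟪B w (Xf y z i j (Function.update x a k) w),
              B (σ w) (Xf y z i j (Function.update x a k) (σ w))⟫_ℂ
          = (⟪B (σ⁻¹ a) (Xf y z i j x (σ⁻¹ a)), B a k⟫_ℂ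
              * ⟪B a k, B (σ a) (Xf y z i j x (σ a))⟫_ℂ)
            * ∏ w ∈ (σ.support.erase a).erase (σ⁻¹ a),
                ⟪B w (Xf y z i j x w), B (σ w) (Xf y z i j x (σ w))⟫_ℂ := by
        intro k
        rw [hsplit]
        have e1 := hXa x k
        have e2 := hXupd x k (σ a) hσa
        have e3 := hXupd x k (σ⁻¹ a) hainv
        have e4 : ∏ w ∈ (σ.support.erase a).erase (σ⁻¹ a),
              ⟪B w (Xf y z i j (Function.update x a k) w),
                B (σ w) (Xf y z i j (Function.update x a k) (σ w))⟫_ℂ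
            = ∏ w ∈ (σ.support.erase a).erase (σ⁻¹ a),
                ⟪B w (Xf y z i j x w), B (σ w) (Xf y z i j x (σ w))⟫_ℂ := by
          refine prod_congr rfl fun w hw => ?_
          have h1 : w ≠ σ⁻¹ a := (mem_erase.1 hw).1
          have h2 : w ≠ a := (mem_erase.1 (mem_erase.1 hw).2).1
          rw [hXupd x k w h2, hXupd x k (σ w) (hσwa w h1)]
        rw [Perm.apply_inv_self σ, e1, e2, e3, e4]
        ring
      calc ∏ w ∈ (Equiv.swap a (σ a) * σ).support,
            ⟪B w (Xf y z i j x w),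
              B ((Equiv.swap a (σ a) * σ) w) (Xf y z i j x ((Equiv.swap a (σ a) * σ) w))⟫_ℂ
          = ⟪B (σ⁻¹ a) (Xf y z i j x (σ⁻¹ a)), B (σ a) (Xf y z i j x (σ a))⟫_ℂ
            * ∏ w ∈ (σ.support.erase a).erase (σ⁻¹ a),
                ⟪B w (Xf y z i j x w), B (σ w) (Xf y z i j x (σ w))⟫_ℂ := by
            rw [hs', hsplit']
            rw [hσ'inv]
            congr 1
            refine prod_congr rfl fun w hw => ?_
            have h1 : w ≠ σ⁻¹ a := (mem_erase.1 hw).1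
            have h2 : w ≠ a := (mem_erase.1 (mem_erase.1 hw).2).1
            rw [hσ'w w h2 h1]
        _ = (∑ k : Fin d, ⟪B (σ⁻¹ a) (Xf y z i j x (σ⁻¹ a)), B a k⟫_ℂ
              * ⟪B a k, B (σ a) (Xf y z i j x (σ a))⟫_ℂ)
            * ∏ w ∈ (σ.support.erase a).erase (σ⁻¹ a),
                ⟪B w (Xf y z i j x w), B (σ w) (Xf y z i j x (σ w))⟫_ℂ := by
            rw [OrthonormalBasis.sum_inner_mul_inner]
        _ = ∑ k : Fin d, ∏ w ∈ σ.support,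
              ⟪B w (Xf y z i j (Function.update x a k) w),
                B (σ w) (Xf y z i j (Function.update x a k) (σ w))⟫_ℂ := by
            rw [Finset.sum_mul]
            exact sum_congr rfl fun k _ => (hR k).symm
    have hTT : ∑ x : Fin n → Fin d, ∏ w ∈ (Equiv.swap a (σ a) * σ).support,
          ⟪B w (Xf y z i j x w),
            B ((Equiv.swap a (σ a) * σ) w) (Xf y z i j x ((Equiv.swap a (σ a) * σ) w))⟫_ℂ
        = (Fintype.card (Fin d)) • ∑ x : Fin n → Fin d, ∏ w ∈ σ.support,
            ⟪B w (Xf y z i j x w), B (σ w) (Xf y z i j x (σ w))⟫_ℂ := by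
      rw [Finset.sum_congr rfl fun x _ => hmerge x]
      exact sum_update a (fun x' => ∏ w ∈ σ.support,
        ⟪B w (Xf y z i j x' w), B (σ w) (Xf y z i j x' (σ w))⟫_ℂ)
    have hd0 : (d : ℂ) ≠ 0 := Nat.cast_ne_zero.2 (Fin.pos i).ne'
    refine mul_left_cancel₀ hd0 ?_
    calc (d : ℂ) * ∑ x : Fin n → Fin d, ∏ w ∈ σ.support,
          ⟪B w (Xf y z i j x w), B (σ w) (Xf y z i j x (σ w))⟫_ℂ
        = (Fintype.card (Fin d)) • ∑ x : Fin n → Fin d, ∏ w ∈ σ.support,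
            ⟪B w (Xf y z i j x w), B (σ w) (Xf y z i j x (σ w))⟫_ℂ := by
          rw [Fintype.card_fin, nsmul_eq_mul]
      _ = ∑ x : Fin n → Fin d, ∏ w ∈ (Equiv.swap a (σ a) * σ).support,
            ⟪B w (Xf y z i j x w),
              B ((Equiv.swap a (σ a) * σ) w) (Xf y z i j x ((Equiv.swap a (σ a) * σ) w))⟫_ℂ :=
          hTT.symm
      _ = (d : ℂ) ^ (n - (m - 1) + 2) * (⟪B y i, B z j⟫_ℂ * ⟪B z j, B y i⟫_ℂ) := hIH
      _ = (d : ℂ) * ((d : ℂ) ^ (n - m + 2) * (⟪B y i, B z j⟫_ℂ * ⟪B z j, B y i⟫_ℂ)) := by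
          rw [show n - (m - 1) + 2 = (n - m + 2) + 1 from by omega, pow_succ]
          ring

  · -- base case : support = {y, z}
    push_neg at hex
    have hsub : σ.support ⊆ {y, z} := by
      intro w hw
      by_contra hw'
      simp only [mem_insert, mem_singleton] at hw'
      push_neg at hw'
      exact hw'.2 (hex w hw hw'.1)
    have hsup : σ.support = {y, z} := by
      refine le_antisymm hsub ?_
      intro w hw
      simp only [mem_insert, mem_singleton] at hw
      rcases hw with rfl | rfl <;> assumption
    have hm2 : m = 2 := by rw [← hm, hsup, card_pair hyz]
    have hσy : σ y = z := by
      have h1 : σ y ∈ σ.support := apply_mem_support.2 hy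
      rw [hsup] at h1
      simp only [mem_insert, mem_singleton] at h1
      rcases h1 with h1 | h1
      · exact absurd h1 (mem_support.1 hy)
      · exact h1
    have hσz : σ z = y := by
      have h1 : σ z ∈ σ.support := apply_mem_support.2 hz
      rw [hsup] at h1
      simp only [mem_insert, mem_singleton] at h1
      rcases h1 with h1 | h1
      · exact h1
      · exact absurd h1 (mem_support.1 hz)
    have hn2 : 2 ≤ n := by
      rw [← hm2, ← hm]
      simpa using card_le_univ σ.support
    have hconst : ∀ x : Fin n → Fin d,
        ∏ w ∈ σ.support, ⟪B w (Xf y z i j x w), B (σ w) (Xf y z i j x (σ w))⟫_ℂ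
          = ⟪B y i, B z j⟫_ℂ * ⟪B z j, B y i⟫_ℂ := by
      intro x
      rw [hsup, prod_pair hyz, hσy, hσz, Xf_y hyz, Xf_z]
    rw [sum_congr rfl fun x _ => hconst x, sum_const, nsmul_eq_mul]
    have hcardfun : (card (univ : Finset (Fin n → Fin d)) : ℂ) = (d : ℂ) ^ (n - m + 2) := by
      rw [card_univ]
      have : n - m + 2 = n := by omega
      rw [this]
      simp [Fintype.card_fun]
    rw [hcardfun]


open Finset in
/-- If `n ≥ 2` orthonormal bases of `ℂ^d` form an `n`UB, then any two distinct bases among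
them are mutually unbiased: all mutual overlaps have modulus `1/√d`. -/
theorem stmt_3 (n d : ℕ) (hn : 2 ≤ n)
    (B : Fin n → OrthonormalBasis (Fin d) ℂ (EuclideanSpace ℂ (Fin d)))
    (hB : IsNUB B) (y z : Fin n) (hyz : y ≠ z) (i j : Fin d) :
    ‖⟪B y i, B z j⟫_ℂ‖ = 1 / Real.sqrt d := by
  classical
  have hd0 : (d : ℂ) ≠ 0 := Nat.cast_ne_zero.2 (Fin.pos i).ne'
  have hBx : ∀ x : Fin n → Fin d,
      (∑ σ ∈ nCycles (Fin n), ∏ w, ⟪B w (Xf y z i j x w), B (σ w) (Xf y z i j x (σ w))⟫_ℂ)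
        = ((n - 1).factorial : ℂ) / (d : ℂ) ^ (n - 1) := by
    intro x
    have h := hB (Xf y z i j x)
    simpa [Fintype.card_fin] using h
  have hL : ∀ σ ∈ nCycles (Fin n),
      ∑ x : Fin n → Fin d, ∏ w, ⟪B w (Xf y z i j x w), B (σ w) (Xf y z i j x (σ w))⟫_ℂ
        = (d : ℂ) ^ 2 * (⟪B y i, B z j⟫_ℂ * ⟪B z j, B y i⟫_ℂ) := by
    intro σ hσmem
    simp only [nCycles, Finset.mem_filter, Finset.mem_univ, true_and] at hσmem
    obtain ⟨hcyc, hsupp⟩ := hσmem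
    have hcard : σ.support.card = n := by rw [hsupp, card_univ, Fintype.card_fin]
    have hk := key B hyz i j n σ hcard hcyc (by rw [hsupp]; exact mem_univ y)
      (by rw [hsupp]; exact mem_univ z)
    rw [Nat.sub_self, zero_add] at hk
    rw [show (Finset.univ : Finset (Fin n)) = σ.support from hsupp.symm]
    exact hk
  have hE : ((nCycles (Fin n)).card : ℂ)
        * ((d : ℂ) ^ 2 * (⟪B y i, B z j⟫_ℂ * ⟪B z j, B y i⟫_ℂ))
      = (d : ℂ) ^ n * (((n - 1).factorial : ℂ) / (d : ℂ) ^ (n - 1)) := by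
    calc ((nCycles (Fin n)).card : ℂ)
          * ((d : ℂ) ^ 2 * (⟪B y i, B z j⟫_ℂ * ⟪B z j, B y i⟫_ℂ))
        = ∑ _σ ∈ nCycles (Fin n),
            (d : ℂ) ^ 2 * (⟪B y i, B z j⟫_ℂ * ⟪B z j, B y i⟫_ℂ) := by
          rw [Finset.sum_const, nsmul_eq_mul]
      _ = ∑ σ ∈ nCycles (Fin n), ∑ x : Fin n → Fin d,
            ∏ w, ⟪B w (Xf y z i j x w), B (σ w) (Xf y z i j x (σ w))⟫_ℂ :=
          (Finset.sum_congr rfl fun σ hσ => hL σ hσ).symm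
      _ = ∑ x : Fin n → Fin d, ∑ σ ∈ nCycles (Fin n),
            ∏ w, ⟪B w (Xf y z i j x w), B (σ w) (Xf y z i j x (σ w))⟫_ℂ :=
          Finset.sum_comm
      _ = ∑ _x : Fin n → Fin d, ((n - 1).factorial : ℂ) / (d : ℂ) ^ (n - 1) :=
          Finset.sum_congr rfl fun x _ => hBx x
      _ = (d : ℂ) ^ n * (((n - 1).factorial : ℂ) / (d : ℂ) ^ (n - 1)) := by
          rw [Finset.sum_const, nsmul_eq_mul, card_univ, Fintype.card_fun]
          push_cast
          simp [Fintype.card_fin]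
  rw [card_nCycles hn] at hE
  have hfac0 : ((n - 1).factorial : ℂ) ≠ 0 := Nat.cast_ne_zero.2 (Nat.factorial_ne_zero _)
  have hdn : (d : ℂ) ^ n = (d : ℂ) ^ (n - 1) * (d : ℂ) := by
    rw [show n = (n - 1) + 1 from by omega, pow_succ]
    simp
  have hrhs : (d : ℂ) ^ n * (((n - 1).factorial : ℂ) / (d : ℂ) ^ (n - 1))
      = (d : ℂ) * ((n - 1).factorial : ℂ) := by
    rw [hdn]
    have hp0 : (d : ℂ) ^ (n - 1) ≠ 0 := pow_ne_zero _ hd0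
    field_simp
  rw [hrhs] at hE
  have h3 : (d : ℂ) ^ 2 * (⟪B y i, B z j⟫_ℂ * ⟪B z j, B y i⟫_ℂ) = (d : ℂ) :=
    mul_left_cancel₀ hfac0 (by rw [hE]; ring)
  have h5 : (d : ℂ) * (⟪B y i, B z j⟫_ℂ * ⟪B z j, B y i⟫_ℂ) = 1 := by
    apply mul_left_cancel₀ hd0
    rw [mul_one]
    calc (d : ℂ) * ((d : ℂ) * (⟪B y i, B z j⟫_ℂ * ⟪B z j, B y i⟫_ℂ))
        = (d : ℂ) ^ 2 * (⟪B y i, B z j⟫_ℂ * ⟪B z j, B y i⟫_ℂ) := by ring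
      _ = (d : ℂ) := h3
  have hK : ⟪B y i, B z j⟫_ℂ * ⟪B z j, B y i⟫_ℂ = (d : ℂ)⁻¹ :=
    eq_inv_of_mul_eq_one_left (by rw [mul_comm] at h5; exact h5)
  have hconj : ⟪B z j, B y i⟫_ℂ = (starRingEnd ℂ) ⟪B y i, B z j⟫_ℂ := by
    rw [inner_conj_symm]
  rw [hconj, Complex.mul_conj] at hK
  have h7 : Complex.normSq ⟪B y i, B z j⟫_ℂ = (d : ℝ)⁻¹ := by
    have h8 : ((Complex.normSq ⟪B y i, B z j⟫_ℂ : ℝ) : ℂ) = (((d : ℝ)⁻¹ : ℝ) : ℂ) := by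
      rw [hK]; push_cast; ring
    exact_mod_cast h8
  have h8 : ‖⟪B y i, B z j⟫_ℂ‖ ^ 2 = (d : ℝ)⁻¹ := by
    rw [Complex.sq_norm]
    exact h7
  have h9 : ‖⟪B y i, B z j⟫_ℂ‖ = Real.sqrt ((d : ℝ)⁻¹) := by
    rw [← h8, Real.sqrt_sq (norm_nonneg _)]
  rw [h9, Real.sqrt_inv, one_div]
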